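/- Suppose Σ_P + λ M^{−1} ⪰ (1/2)(Σ_P,pop + λ M^{−1}) where Σ_P,pop ⪰ (1/B)·I, and let θ* satisfy θ*ᵀ M^{−1} θ* ≤ H². Then λ²‖(Σ_P + λM^{−1})^{−1} M^{−1} θ*‖₂² ≤ 2·λ·B·H². -/

import Mathlib

noncomputable abbrev H13 : Type := lp (fun _ : ℕ => ℝ) 2

/-- The bias bound T₁ ≤ 2λB·H² for kernel ridge regression under covariate shift:
if Σ_P + λM⁻¹ ⪰ ½(Σ_pop + λM⁻¹) with Σ_pop ⪰ (1/B)·I, M⁻¹ = diag(1/μ_j), and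
θ* satisfies θ*ᵀM⁻¹θ* ≤ H², then λ²‖(Σ_P + λM⁻¹)⁻¹M⁻¹θ*‖² ≤ 2λBH². -/
theorem krr_bias_bound
    (μ : ℕ → ℝ) (B lam Hn : ℝ)
    (hμ : ∀ j, 0 < μ j) (hB : 1 ≤ B) (hlam : 0 < lam) (hHn : 0 ≤ Hn)
    (SigP Sigpop Minv Rinv : H13 →L[ℝ] H13) (θstar : H13)
    -- M⁻¹ is the diagonal operator with entries 1/μ_j
    (hMinv : ∀ (v : H13) (j : ℕ), (Minv v) j = (μ j)⁻¹ * v j)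
    -- Σ_P (empirical covariance) is self-adjoint and positive semidefinite
    (hSigP_sa : ∀ v w : H13, (inner ℝ (SigP v) w : ℝ) = inner ℝ v (SigP w))
    (hSigP_pos : ∀ v : H13, (0 : ℝ) ≤ inner ℝ v (SigP v))
    -- Σ_pop is self-adjoint and Σ_pop ⪰ (1/B)·I
    (hSigpop_sa : ∀ v w : H13, (inner ℝ (Sigpop v) w : ℝ) = inner ℝ v (Sigpop w))
    (hSigpop_lb : ∀ v : H13, (1 / B) * ‖v‖ ^ 2 ≤ (inner ℝ v (Sigpop v) : ℝ))
    -- Σ_P + λM⁻¹ ⪰ ½(Σ_pop + λM⁻¹)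
    (hhalf : ∀ v : H13,
      (1 / 2) * ((inner ℝ v (Sigpop v) : ℝ) + lam * (inner ℝ v (Minv v) : ℝ))
        ≤ (inner ℝ v (SigP v) : ℝ) + lam * (inner ℝ v (Minv v) : ℝ))
    -- θ* has Hilbert norm at most H: θ*ᵀM⁻¹θ* ≤ H²
    (hθstar : (inner ℝ θstar (Minv θstar) : ℝ) ≤ Hn ^ 2)
    -- Rinv is a two-sided inverse of Σ_P + λM⁻¹
    (hRinv_left : ∀ v : H13, Rinv (SigP v + lam • Minv v) = v)
    (hRinv_right : ∀ v : H13, SigP (Rinv v) + lam • Minv (Rinv v) = v) :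
    lam ^ 2 * ‖Rinv (Minv θstar)‖ ^ 2 ≤ 2 * lam * B * Hn ^ 2 := by
  set w : H13 := Rinv (Minv θstar) with hw
  have hB0 : (0 : ℝ) < B := lt_of_lt_of_le one_pos hB
  -- positivity of the Minv quadratic form
  have hpos : ∀ u : H13, (0 : ℝ) ≤ inner ℝ u (Minv u) := by
    intro u
    rw [lp.inner_eq_tsum]
    apply tsum_nonneg
    intro j
    have : (inner ℝ (u j) ((Minv u) j) : ℝ) = u j * ((μ j)⁻¹ * u j) := by
      rw [hMinv]; simp [RCLike.inner_apply]; ring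
    rw [this]
    have : u j * ((μ j)⁻¹ * u j) = (μ j)⁻¹ * (u j) ^ 2 := by ring
    rw [this]
    exact mul_nonneg (inv_nonneg.mpr (hμ j).le) (sq_nonneg _)
  -- symmetry of the Minv quadratic form
  have hsymm : ∀ u v : H13, (inner ℝ u (Minv v) : ℝ) = inner ℝ v (Minv u) := by
    intro u v
    rw [lp.inner_eq_tsum, lp.inner_eq_tsum]
    apply tsum_congr
    intro j
    rw [hMinv, hMinv]
    simp [RCLike.inner_apply]
    ring
  -- key identity: ⟨w, Minv θ*⟩ = ⟨w, SigP w⟩ + lam ⟨w, Minv w⟩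
  have hkey : (inner ℝ w (Minv θstar) : ℝ)
      = (inner ℝ w (SigP w) : ℝ) + lam * (inner ℝ w (Minv w) : ℝ) := by
    conv_lhs => rw [← hRinv_right (Minv θstar)]
    rw [← hw, inner_add_right, real_inner_smul_right]
  -- quadratic inequality: 0 ≤ ⟨lam•w - θ*, Minv (lam•w - θ*)⟩
  have hquad := hpos (lam • w - θstar)
  have hexp : (inner ℝ (lam • w - θstar) (Minv (lam • w - θstar)) : ℝ)
      = lam ^ 2 * (inner ℝ w (Minv w) : ℝ) - 2 * lam * (inner ℝ w (Minv θstar) : ℝ)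
        + (inner ℝ θstar (Minv θstar) : ℝ) := by
    rw [map_sub, map_smul, inner_sub_left, inner_sub_right, inner_sub_right,
      real_inner_smul_left, real_inner_smul_left, real_inner_smul_right,
      real_inner_smul_right, hsymm θstar w]
    ring
  rw [hexp] at hquad
  -- lower bound on ⟨w, Minv θ*⟩
  have hlow : (1 / B) * ‖w‖ ^ 2 / 2 + (lam / 2) * (inner ℝ w (Minv w) : ℝ)
      ≤ (inner ℝ w (Minv θstar) : ℝ) := by
    rw [hkey]
    have h1 := hhalf w
    have h2 := hSigpop_lb w
    nlinarith
  -- combine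
  have hnorm : lam * ((1 / B) * ‖w‖ ^ 2) ≤ Hn ^ 2 := by nlinarith
  have h3 : lam * ‖w‖ ^ 2 ≤ B * Hn ^ 2 := by
    have heq : lam * ‖w‖ ^ 2 = B * (lam * (1 / B * ‖w‖ ^ 2)) := by
      field_simp
    rw [heq]
    exact mul_le_mul_of_nonneg_left hnorm hB0.le
  have h4 := mul_le_mul_of_nonneg_left h3 hlam.le
  nlinarith [sq_nonneg Hn, hlam.le, hB0.le]
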